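/- For any polynomial u of degree at most p on a bounded open interval T = (a,b), the sup-norm of u on T is bounded by (p+1)/sqrt(|T|) times the L²-norm of u on T, i.e. ‖u‖_{L^∞(T)} ≤ (p+1)/√(b−a) · ‖u‖_{L²(T)}. -/

import Mathlib

open Polynomial MeasureTheory intervalIntegral Finset

noncomputable def fk (k : ℕ) : Polynomial ℝ := (X ^ 2 - X) ^ k
noncomputable def LM (k : ℕ) : Polynomial ℝ := derivative^[k] (fk k)

lemma polyIntegrable (Q : Polynomial ℝ) (a b : ℝ) :
    IntervalIntegrable (fun x => Q.eval x) volume a b :=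
  Q.continuous.intervalIntegrable a b

lemma integral_derivative (Q : Polynomial ℝ) (a b : ℝ) :
    ∫ x in a..b, (derivative Q).eval x = Q.eval b - Q.eval a := by
  have hd : deriv (fun x : ℝ => Q.eval x) = fun x => (derivative Q).eval x :=
    funext fun x => Q.deriv
  exact intervalIntegral.integral_deriv_eq_sub' _ hd
    (fun x _ => Q.differentiable.differentiableAt)
    ((derivative Q).continuous.continuousOn)

lemma parts (A B : Polynomial ℝ) :
    ∫ x in (0:ℝ)..1, (derivative A * B).eval x
      = A.eval 1 * B.eval 1 - A.eval 0 * B.eval 0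
        - ∫ x in (0:ℝ)..1, (A * derivative B).eval x := by
  have h := integral_derivative (A * B) 0 1
  rw [derivative_mul] at h
  have hadd : ∫ x in (0:ℝ)..1, (derivative A * B + A * derivative B).eval x
      = (∫ x in (0:ℝ)..1, (derivative A * B).eval x)
        + ∫ x in (0:ℝ)..1, (A * derivative B).eval x := by
    simp only [eval_add]
    exact intervalIntegral.integral_add (polyIntegrable _ 0 1) (polyIntegrable _ 0 1)
  rw [hadd, eval_mul, eval_mul] at h
  linarith

lemma iter_deriv_fk_factor : ∀ (m k : ℕ), m ≤ k → ∃ h : Polynomial ℝ,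
    derivative^[m] (fk k) = (X ^ 2 - X) ^ (k - m) * h := by
  intro m
  induction m with
  | zero => exact fun k _ => ⟨1, by simp [fk]⟩
  | succ m ih =>
    intro k hk
    obtain ⟨h, hh⟩ := ih k (Nat.le_of_succ_le hk)
    have hkm : k - m = (k - (m + 1)) + 1 := by omega
    refine ⟨C ((((k - (m+1)) + 1 : ℕ)) : ℝ) * derivative (X ^ 2 - X) * h
      + (X ^ 2 - X) * derivative h, ?_⟩
    rw [Function.iterate_succ_apply', hh, hkm, derivative_mul, derivative_pow]
    simp only [Nat.add_sub_cancel]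
    ring

lemma eval_iter_deriv_fk {m k : ℕ} (h : m < k) {x : ℝ} (hx : x ^ 2 - x = 0) :
    (derivative^[m] (fk k)).eval x = 0 := by
  obtain ⟨g, hg⟩ := iter_deriv_fk_factor m k h.le
  have hkm : k - m ≠ 0 := by omega
  rw [hg, eval_mul, eval_pow, eval_sub, eval_pow, eval_X]
  rw [hx, zero_pow hkm, zero_mul]

lemma parts_iter (k : ℕ) : ∀ m, m ≤ k → ∀ Q : Polynomial ℝ,
    ∫ x in (0:ℝ)..1, (Q * derivative^[m] (fk k)).eval x
      = (-1:ℝ)^m * ∫ x in (0:ℝ)..1, (derivative^[m] Q * fk k).eval x := by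
  intro m
  induction m with
  | zero => intro _ Q; simp
  | succ m ih =>
    intro hm Q
    have hmk : m < k := hm
    rw [Function.iterate_succ_apply']
    have hpar := parts (derivative^[m] (fk k)) Q
    have h0 : (derivative^[m] (fk k)).eval 0 = 0 := eval_iter_deriv_fk hmk (by ring)
    have h1 : (derivative^[m] (fk k)).eval 1 = 0 := eval_iter_deriv_fk hmk (by ring)
    rw [h0, h1, zero_mul, zero_mul, sub_zero, zero_sub] at hpar
    have hcomm : ∫ x in (0:ℝ)..1, (Q * derivative (derivative^[m] (fk k))).eval x
        = ∫ x in (0:ℝ)..1, (derivative (derivative^[m] (fk k)) * Q).eval x := by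
      rw [mul_comm]
    rw [hcomm, hpar]
    have := ih hmk.le (derivative Q)
    rw [mul_comm (derivative Q)] at this
    rw [this, ← Function.iterate_succ_apply]
    ring

lemma J_val : ∀ (bn an : ℕ),
    ∫ x in (0:ℝ)..1, (X ^ an * (1 - X : Polynomial ℝ) ^ bn).eval x
      = (an.factorial * bn.factorial : ℝ) / (an + bn + 1).factorial := by
  intro bn
  induction bn with
  | zero =>
    intro an
    simp only [pow_zero, mul_one, eval_pow, eval_X, Nat.factorial_zero, Nat.cast_one]
    rw [integral_pow]
    simp [Nat.factorial_succ]
    have h1 : (an.factorial : ℝ) ≠ 0 := Nat.cast_ne_zero.mpr an.factorial_ne_zero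
    have h2 : ((an : ℝ) + 1) ≠ 0 := by positivity
    field_simp
  | succ bn ih =>
    intro an
    have hpar := parts (X ^ (an+1)) ((1 - X : Polynomial ℝ) ^ (bn+1))
    have hdX : derivative ((X : Polynomial ℝ) ^ (an+1)) = C ((an+1 : ℕ) : ℝ) * X ^ an := by
      rw [derivative_pow]; simp
    have hd1X : derivative ((1 - X : Polynomial ℝ) ^ (bn+1))
        = -(C ((bn+1 : ℕ) : ℝ) * (1 - X) ^ bn) := by
      rw [derivative_pow]; simp [derivative_one]; try ring
    rw [hdX, hd1X] at hpar
    simp only [eval_pow, eval_X, eval_sub, eval_one, one_pow, eval_mul] at hpar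
    -- boundary terms vanish
    norm_num at hpar
    have hA : ∫ x in (0:ℝ)..1, ((an:ℝ) + 1) * x ^ an * (1 - x) ^ (bn+1)
        = ((an:ℝ) + 1) * ∫ x in (0:ℝ)..1, x ^ an * (1 - x) ^ (bn+1) := by
      simp only [mul_assoc]
      exact intervalIntegral.integral_const_mul _ _
    have hB : ∫ x in (0:ℝ)..1, x ^ (an+1) * (((bn:ℝ) + 1) * (1 - x) ^ bn)
        = ((bn:ℝ) + 1) * ∫ x in (0:ℝ)..1, x ^ (an+1) * (1 - x) ^ bn := by
      simp only [show ∀ x : ℝ, x ^ (an+1) * (((bn:ℝ) + 1) * (1 - x) ^ bn)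
        = ((bn:ℝ) + 1) * (x ^ (an+1) * (1 - x) ^ bn) from fun x => by ring]
      exact intervalIntegral.integral_const_mul _ _
    have ihB := ih (an+1)
    simp only [eval_mul, eval_pow, eval_X, eval_sub, eval_one] at ihB ⊢
    rw [hA, hB, ihB] at hpar
    have hfac : ((an + (bn+1) + 1).factorial : ℝ) ≠ 0 :=
      Nat.cast_ne_zero.mpr (Nat.factorial_ne_zero _)
    have han : ((an:ℝ) + 1) ≠ 0 := by positivity
    have heq : (an + 1) + bn + 1 = an + (bn + 1) + 1 := by omega
    rw [heq] at hpar
    rw [eq_div_iff hfac]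
    have expand : ((an+1).factorial : ℝ) = ((an:ℝ)+1) * an.factorial := by
      rw [Nat.factorial_succ]; push_cast; ring
    have expand2 : (((bn+1)).factorial : ℝ) = ((bn:ℝ)+1) * bn.factorial := by
      rw [Nat.factorial_succ]; push_cast; ring
    rw [expand] at hpar
    field_simp at hpar
    rw [expand2]
    nlinarith [hpar]

lemma fk_natDegree (k : ℕ) : (fk k).natDegree = 2 * k := by
  have h2 : ((X : Polynomial ℝ) ^ 2 - X).natDegree = 2 := by
    compute_degree!
  rw [fk, natDegree_pow, h2, mul_comm]

lemma fk_coeff (k : ℕ) : (fk k).coeff (2 * k) = 1 := by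
  have hm : ((X : Polynomial ℝ) ^ 2 - X).Monic := by
    apply monic_X_pow_sub
    simpa using degree_X_le
  have : (fk k).Monic := hm.pow k
  have h := this.coeff_natDegree
  rwa [fk_natDegree] at h

lemma integral_fk (k : ℕ) : ∫ x in (0:ℝ)..1, (fk k).eval x
    = (-1:ℝ)^k * ((k.factorial : ℝ) * k.factorial / (2*k+1).factorial) := by
  have hfun : ∀ x : ℝ, (fk k).eval x = (-1:ℝ)^k * ((X ^ k * (1 - X : Polynomial ℝ) ^ k).eval x) := by
    intro x
    simp only [fk, eval_pow, eval_sub, eval_X, eval_mul, eval_one]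
    rw [show x ^ 2 - x = -1 * (x * (1 - x)) from by ring, mul_pow, mul_pow]
    try ring
  simp only [hfun]
  rw [intervalIntegral.integral_const_mul, J_val k k]
  norm_num [show k + k + 1 = 2*k+1 from by omega]

lemma LM_natDegree_le (k : ℕ) : (LM k).natDegree ≤ k := by
  have := natDegree_iterate_derivative (fk k) k
  rwa [fk_natDegree, show 2*k - k = k from by omega] at this

lemma LM_coeff (k : ℕ) : (LM k).coeff k = ((2*k).descFactorial k : ℝ) := by
  rw [LM, coeff_iterate_derivative, show k + k = 2*k from by omega, fk_coeff]
  simp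

lemma LM_eval_zero (k : ℕ) : (LM k).eval 0 = (-1:ℝ)^k * k.factorial := by
  rw [← coeff_zero_eq_eval_zero, LM, coeff_iterate_derivative]
  have hc : (fk k).coeff k = (-1:ℝ)^k := by
    have hfk : fk k = X ^ k * ((X : Polynomial ℝ) - 1) ^ k := by
      rw [fk, ← mul_pow]; congr 1; ring
    have hcc := coeff_X_pow_mul (((X : Polynomial ℝ) - 1) ^ k) k 0
    rw [zero_add] at hcc
    rw [hfk, hcc, coeff_zero_eq_eval_zero]
    simp
  rw [zero_add, hc, Nat.descFactorial_self]
  simp [mul_comm]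

lemma LM_eval_one (k : ℕ) : (LM k).eval 1 = (k.factorial : ℝ) := by
  have hh : (k.factorial • Polynomial.hasseDeriv k (fk k)) = derivative^[k] (fk k) := by
    rw [← Polynomial.factorial_smul_hasseDeriv (R := ℝ) k]
    rfl
  have htay : (Polynomial.taylor 1 (fk k)).coeff k = (Polynomial.hasseDeriv k (fk k)).eval 1 :=
    Polynomial.taylor_coeff 1 (fk k) k
  have htaylor : Polynomial.taylor 1 (fk k) = X ^ k * ((X : Polynomial ℝ) + 1) ^ k := by
    rw [Polynomial.taylor_apply, fk, pow_comp, sub_comp, pow_comp, X_comp, ← mul_pow]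
    congr 1
    simp only [C_1]
    ring
  have hcoeff : (Polynomial.taylor 1 (fk k)).coeff k = 1 := by
    have hcc := coeff_X_pow_mul (((X : Polynomial ℝ) + 1) ^ k) k 0
    rw [zero_add] at hcc
    rw [htaylor, hcc, coeff_zero_eq_eval_zero]
    simp
  have : (LM k).eval 1 = (k.factorial • Polynomial.hasseDeriv k (fk k)).eval 1 := by
    rw [hh]; rfl
  rw [this, Polynomial.eval_smul, ← htay, hcoeff]
  simp

lemma iter_deriv_LM (k : ℕ) : derivative^[k] (LM k) = C (((2*k).factorial : ℝ)) := by
  have h1 : derivative^[k] (LM k) = derivative^[2*k] (fk k) := by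
    rw [LM, ← Function.iterate_add_apply, show k + k = 2*k from by omega]
  have hdeg : (derivative^[2*k] (fk k)).natDegree ≤ 0 := by
    have := natDegree_iterate_derivative (fk k) (2*k)
    rwa [fk_natDegree, Nat.sub_self] at this
  have hco : (derivative^[2*k] (fk k)).coeff 0 = ((2*k).factorial : ℝ) := by
    rw [coeff_iterate_derivative, zero_add, fk_coeff, Nat.descFactorial_self]
    simp
  rw [h1, Polynomial.eq_C_of_natDegree_le_zero hdeg, hco]

lemma LM_ortho {j k : ℕ} (h : j < k) :
    ∫ x in (0:ℝ)..1, (LM j).eval x * (LM k).eval x = 0 := by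
  have hp := parts_iter k k le_rfl (LM j)
  have hz : derivative^[k] (LM j) = 0 := by
    rw [LM, ← Function.iterate_add_apply]
    apply Polynomial.iterate_derivative_eq_zero
    rw [fk_natDegree]
    omega
  rw [hz] at hp
  simp only [zero_mul, eval_zero, intervalIntegral.integral_zero, mul_zero] at hp
  have : ∀ x : ℝ, (LM j).eval x * (LM k).eval x = (LM j * derivative^[k] (fk k)).eval x := by
    intro x; rw [eval_mul]; rfl
  simp only [this]
  exact hp

lemma LM_norm (k : ℕ) :
    ∫ x in (0:ℝ)..1, (LM k).eval x * (LM k).eval x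
      = (k.factorial : ℝ)^2 / (2*(k:ℝ)+1) := by
  have hp := parts_iter k k le_rfl (LM k)
  rw [iter_deriv_LM] at hp
  have e1 : ∀ x : ℝ, (LM k).eval x * (LM k).eval x = (LM k * derivative^[k] (fk k)).eval x := by
    intro x; rw [eval_mul]; rfl
  simp only [e1]
  rw [hp]
  have e2 : ∀ x : ℝ, (C (((2*k).factorial : ℝ)) * fk k).eval x
      = ((2*k).factorial : ℝ) * (fk k).eval x := by
    intro x; simp
  simp only [e2]
  rw [intervalIntegral.integral_const_mul, integral_fk]
  have h1 : (((2*k+1).factorial : ℝ)) = (2*(k:ℝ)+1) * ((2*k).factorial : ℝ) := by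
    rw [Nat.factorial_succ]; push_cast; ring
  have h2 : (((2*k).factorial : ℝ)) ≠ 0 := Nat.cast_ne_zero.mpr (Nat.factorial_ne_zero _)
  have h3 : (2*(k:ℝ)+1) ≠ 0 := by positivity
  rw [h1]
  have h4 : ((-1:ℝ)^k)^2 = 1 := by
    rw [← pow_mul, mul_comm, pow_mul]; norm_num
  field_simp
  linear_combination h4

lemma LM_ortho' {j k : ℕ} (h : j ≠ k) :
    ∫ x in (0:ℝ)..1, (LM j).eval x * (LM k).eval x = 0 := by
  rcases lt_or_gt_of_ne h with h' | h'
  · exact LM_ortho h'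
  · have := LM_ortho h'
    simpa [mul_comm] using this

lemma LM_coeff_ne (k : ℕ) : (LM k).coeff k ≠ 0 := by
  rw [LM_coeff]
  have : (2*k).descFactorial k ≠ 0 := by
    rw [Ne, Nat.descFactorial_eq_zero_iff_lt]
    omega
  exact_mod_cast this

lemma rep : ∀ (n : ℕ) (P : Polynomial ℝ), P.natDegree ≤ n →
    ∃ c : ℕ → ℝ, P = ∑ k ∈ range (n+1), C (c k) * LM k := by
  intro n
  induction n with
  | zero =>
    intro P hP
    refine ⟨fun _ => P.coeff 0, ?_⟩
    rw [Polynomial.eq_C_of_natDegree_le_zero hP]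
    simp [LM, fk]
  | succ n ih =>
    intro P hP
    set d : ℝ := P.coeff (n+1) / (LM (n+1)).coeff (n+1) with hd
    have hQdeg : (P - C d * LM (n+1)).natDegree ≤ n := by
      rw [Polynomial.natDegree_le_iff_coeff_eq_zero]
      intro m hm
      rw [coeff_sub, coeff_C_mul]
      rcases eq_or_lt_of_le (Nat.succ_le_of_lt hm) with hme | hml
      · rw [← hme, hd, div_mul_cancel₀ _ (LM_coeff_ne (n+1)), sub_self]
      · have hPm : P.coeff m = 0 := by
          apply Polynomial.coeff_eq_zero_of_natDegree_lt
          omega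
        have hLm : (LM (n+1)).coeff m = 0 := by
          apply Polynomial.coeff_eq_zero_of_natDegree_lt
          exact lt_of_le_of_lt (LM_natDegree_le (n+1)) hml
        rw [hPm, hLm, mul_zero, sub_zero]
    obtain ⟨c, hc⟩ := ih _ hQdeg
    refine ⟨fun k => if k = n+1 then d else c k, ?_⟩
    rw [Finset.sum_range_succ]
    have hsum : ∑ k ∈ range (n+1), C (if k = n+1 then d else c k) * LM k
        = ∑ k ∈ range (n+1), C (c k) * LM k := by
      apply Finset.sum_congr rfl
      intro k hk
      have : k ≠ n + 1 := by
        have := Finset.mem_range.mp hk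
        omega
      rw [if_neg this]
    simp only []
    rw [hsum, if_pos trivial, ← hc]
    ring

lemma sum_odd (p : ℕ) : ∑ k ∈ range (p+1), (2*(k:ℝ)+1) = ((p:ℝ)+1)^2 := by
  induction p with
  | zero => simp
  | succ n ih => rw [Finset.sum_range_succ, ih]; push_cast; ring

lemma endpoint (p : ℕ) (P : Polynomial ℝ) (hdeg : P.natDegree ≤ p)
    (e : ℝ) (he : e = 0 ∨ e = 1) :
    (P.eval e)^2 ≤ ((p:ℝ)+1)^2 * ∫ x in (0:ℝ)..1, (P.eval x)^2 := by
  obtain ⟨c, hc⟩ := rep p P hdeg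
  have heval : ∀ x : ℝ, P.eval x = ∑ k ∈ range (p+1), c k * (LM k).eval x := by
    intro x; rw [hc, eval_finset_sum]; simp
  have hint : ∫ x in (0:ℝ)..1, (P.eval x)^2
      = ∑ k ∈ range (p+1), (c k)^2 * ((k.factorial:ℝ)^2/(2*(k:ℝ)+1)) := by
    have hexp : ∀ x : ℝ, (P.eval x)^2 = ∑ j ∈ range (p+1), ∑ k ∈ range (p+1),
        (c j * c k) * ((LM j).eval x * (LM k).eval x) := by
      intro x
      rw [heval x, sq, Finset.sum_mul_sum]
      apply Finset.sum_congr rfl; intro j _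
      apply Finset.sum_congr rfl; intro k _
      ring
    simp only [hexp]
    rw [intervalIntegral.integral_finset_sum]
    swap
    · intro j _
      exact (continuous_finset_sum _ fun k _ =>
        (continuous_const.mul (((LM j).continuous).mul ((LM k).continuous)))).intervalIntegrable _ _
    have hinner : ∀ j ∈ range (p+1),
        ∫ x in (0:ℝ)..1, ∑ k ∈ range (p+1), (c j * c k) * ((LM j).eval x * (LM k).eval x)
          = (c j)^2 * ((j.factorial:ℝ)^2/(2*(j:ℝ)+1)) := by
      intro j hj
      rw [intervalIntegral.integral_finset_sum]
      swap
      · intro k _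
        exact (continuous_const.mul
          (((LM j).continuous).mul ((LM k).continuous))).intervalIntegrable _ _
      have hterm : ∀ k ∈ range (p+1),
          ∫ x in (0:ℝ)..1, (c j * c k) * ((LM j).eval x * (LM k).eval x)
            = (c j * c k) * ∫ x in (0:ℝ)..1, (LM j).eval x * (LM k).eval x := by
        intro k _
        exact intervalIntegral.integral_const_mul _ _
      rw [Finset.sum_congr rfl hterm]
      rw [Finset.sum_eq_single j]
      · rw [LM_norm]; ring
      · intro k _ hk
        rw [LM_ortho' (Ne.symm hk), mul_zero]
      · intro hj'; exact absurd hj hj'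
    exact Finset.sum_congr rfl hinner
  -- Cauchy-Schwarz
  set f : ℕ → ℝ := fun k => c k * k.factorial / Real.sqrt (2*(k:ℝ)+1) with hf
  set g : ℕ → ℝ := fun k => (LM k).eval e * Real.sqrt (2*(k:ℝ)+1) / k.factorial with hg
  have hkfac : ∀ k : ℕ, (k.factorial : ℝ) ≠ 0 :=
    fun k => Nat.cast_ne_zero.mpr k.factorial_ne_zero
  have hsq : ∀ k : ℕ, Real.sqrt (2*(k:ℝ)+1) ^ 2 = 2*(k:ℝ)+1 := by
    intro k; rw [Real.sq_sqrt]; positivity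
  have hsqne : ∀ k : ℕ, Real.sqrt (2*(k:ℝ)+1) ≠ 0 := by
    intro k
    have : (0:ℝ) < Real.sqrt (2*(k:ℝ)+1) := Real.sqrt_pos.mpr (by positivity)
    exact this.ne'
  have hfg : ∀ k : ℕ, f k * g k = c k * (LM k).eval e := by
    intro k
    simp only [hf, hg]
    field_simp
  have hLMe : ∀ k : ℕ, ((LM k).eval e)^2 = (k.factorial:ℝ)^2 := by
    intro k
    rcases he with he | he
    · rw [he, LM_eval_zero, mul_pow, ← pow_mul, mul_comm k 2, pow_mul]
      norm_num
    · rw [he, LM_eval_one]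
  have hg2 : ∀ k : ℕ, (g k)^2 = 2*(k:ℝ)+1 := by
    intro k
    rw [hg]
    simp only []
    rw [div_pow, mul_pow, hLMe k, hsq k]
    field_simp
  have hf2 : ∀ k : ℕ, (f k)^2 = (c k)^2 * ((k.factorial:ℝ)^2/(2*(k:ℝ)+1)) := by
    intro k
    rw [hf]
    simp only []
    rw [div_pow, mul_pow, hsq k]
    ring
  have hcs := Finset.sum_mul_sq_le_sq_mul_sq (range (p+1)) f g
  have heq : (P.eval e)^2 = (∑ k ∈ range (p+1), f k * g k)^2 := by
    rw [heval e]
    congr 1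
    exact Finset.sum_congr rfl (fun k _ => (hfg k).symm)
  rw [heq, hint]
  calc (∑ k ∈ range (p+1), f k * g k)^2
      ≤ (∑ k ∈ range (p+1), (f k)^2) * ∑ k ∈ range (p+1), (g k)^2 := hcs
    _ = ((p:ℝ)+1)^2 * ∑ k ∈ range (p+1), (c k)^2 * ((k.factorial:ℝ)^2/(2*(k:ℝ)+1)) := by
        rw [Finset.sum_congr rfl (fun k _ => hf2 k), Finset.sum_congr rfl (fun k _ => hg2 k),
          sum_odd]
        ring

lemma scaled (p : ℕ) (P : Polynomial ℝ) (hdeg : P.natDegree ≤ p) {c d : ℝ} (hcd : c < d) :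
    (P.eval d)^2 ≤ ((p:ℝ)+1)^2 / (d - c) * ∫ x in c..d, (P.eval x)^2
    ∧ (P.eval c)^2 ≤ ((p:ℝ)+1)^2 / (d - c) * ∫ x in c..d, (P.eval x)^2 := by
  have hdc : d - c ≠ 0 := by linarith [hcd]
  set Q : Polynomial ℝ := P.comp (C c + C (d - c) * X) with hQ
  have hQdeg : Q.natDegree ≤ p := by
    rw [hQ, natDegree_comp]
    have h1 : (C c + C (d - c) * X).natDegree = 1 := by
      compute_degree!
    rw [h1, mul_one]
    exact hdeg
  have hQeval : ∀ x : ℝ, Q.eval x = P.eval ((d - c) * x + c) := by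
    intro x
    rw [hQ, eval_comp]
    simp [mul_comm, add_comm]
  have hQint : ∫ x in (0:ℝ)..1, (Q.eval x)^2 = (d - c)⁻¹ * ∫ y in c..d, (P.eval y)^2 := by
    simp only [hQeval]
    have := intervalIntegral.integral_comp_mul_add (a := (0:ℝ)) (b := 1)
      (f := fun y => (P.eval y)^2) hdc c
    rw [this]
    norm_num
  have h1 : Q.eval 1 = P.eval d := by rw [hQeval]; norm_num
  have h0 : Q.eval 0 = P.eval c := by rw [hQeval]; norm_num
  constructor
  · have := endpoint p Q hQdeg 1 (Or.inr rfl)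
    rw [h1, hQint] at this
    calc (P.eval d)^2 ≤ ((p:ℝ)+1)^2 * ((d - c)⁻¹ * ∫ y in c..d, (P.eval y)^2) := this
      _ = ((p:ℝ)+1)^2 / (d - c) * ∫ x in c..d, (P.eval x)^2 := by ring
  · have := endpoint p Q hQdeg 0 (Or.inl rfl)
    rw [h0, hQint] at this
    calc (P.eval c)^2 ≤ ((p:ℝ)+1)^2 * ((d - c)⁻¹ * ∫ y in c..d, (P.eval y)^2) := this
      _ = ((p:ℝ)+1)^2 / (d - c) * ∫ x in c..d, (P.eval x)^2 := by ring

/-- Inverse inequality for polynomials on a bounded interval `T = (a,b)`: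
the sup-norm of a polynomial of degree at most `p` on `T` is bounded by
`(p+1)/√(b-a)` times its `L²` norm on `T`. -/
theorem stmt_0 (p : ℕ) (a b : ℝ) (hab : a < b) (P : Polynomial ℝ)
    (hdeg : P.natDegree ≤ p) :
    ∀ t ∈ Set.Ioo a b,
      |P.eval t| ≤ ((p : ℝ) + 1) / Real.sqrt (b - a) *
        Real.sqrt (∫ s in Set.Ioo a b, (P.eval s) ^ 2) := by
  intro t ht
  obtain ⟨hat, htb⟩ := ht
  set S1 : ℝ := ∫ x in a..t, (P.eval x)^2 with hS1
  set S2 : ℝ := ∫ x in t..b, (P.eval x)^2 with hS2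
  have hsq_int : ∀ u v : ℝ, IntervalIntegrable (fun x => (P.eval x)^2) volume u v := by
    intro u v
    exact (P.continuous.pow 2).intervalIntegrable u v
  have hS : ∫ s in Set.Ioo a b, (P.eval s) ^ 2 = S1 + S2 := by
    rw [hS1, hS2, intervalIntegral.integral_add_adjacent_intervals (hsq_int a t) (hsq_int t b),
      intervalIntegral.integral_of_le hab.le, MeasureTheory.integral_Ioc_eq_integral_Ioo]
  have h1 := (scaled p P hdeg hat).1
  have h2 := (scaled p P hdeg htb).2
  rw [← hS1] at h1
  rw [← hS2] at h2
  have hta : (0:ℝ) < t - a := by linarith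
  have hbt : (0:ℝ) < b - t := by linarith
  have hba : (0:ℝ) < b - a := by linarith
  rw [div_mul_eq_mul_div, le_div_iff₀ hta] at h1
  rw [div_mul_eq_mul_div, le_div_iff₀ hbt] at h2
  have hkey : (P.eval t)^2 ≤ ((p:ℝ)+1)^2 * (S1 + S2) / (b - a) := by
    rw [le_div_iff₀ hba]
    nlinarith [h1, h2]
  have hS1nn : 0 ≤ S1 :=
    intervalIntegral.integral_nonneg hat.le (fun x _ => sq_nonneg _)
  have hS2nn : 0 ≤ S2 :=
    intervalIntegral.integral_nonneg htb.le (fun x _ => sq_nonneg _)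
  rw [hS]
  have habs : |P.eval t| = Real.sqrt ((P.eval t)^2) := (Real.sqrt_sq_eq_abs _).symm
  rw [habs]
  have hstep := Real.sqrt_le_sqrt hkey
  apply le_trans hstep
  rw [show ((p:ℝ)+1)^2 * (S1 + S2) / (b - a) = (((p:ℝ)+1)^2 / (b - a)) * (S1 + S2) from by ring]
  rw [Real.sqrt_mul (by positivity) (S1 + S2), Real.sqrt_div (by positivity) (b - a),
    Real.sqrt_sq (by positivity)]
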